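/- Let S be a finite set, A = A₁ × ⋯ × A_N a finite product of action sets, and P : S × A × S → [0,1] with ∑_{s'∈S} P(s,a,s') = 1 for all s, a. On S' = S × A define the deterministic queueing maps T_i(( s, a₁,…,a_i,…,a_N), a'_i) = (s, a₁,…,a'_i,…,a_N) and the environment kernel P'((s,a),(s',a')) = P(s,a,s')·[a = a']. Fix a joint action a* = (a*₁,…,a*_N) ∈ A and a probability distribution μ on S. Let μ' be the distribution on S' with μ'(s, b) = μ(s) for one fixed tuple b ∈ A (and 0 elsewhere), let σ ↦ T_i(σ, a*_i) be applied as a pushforward successively for i = 1,…,N to μ', and let μ'' be the result of then applying P' (i.e., μ''(σ') = ∑_{σ∈S'} (pushforward distribution)(σ)·P'(σ,σ')). Then μ'' is supported on pairs (s', a*) whose action component equals a*, and for every s' ∈ S, ∑_{a'∈A} μ''(s', a') = μ''(s', a*) = ∑_{s∈S} μ(s)·P(s, a*, s'). That is, one full agent-environment cycle of the constructed AEC game reproduces exactly one transition step of the POSG in distribution. -/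

import Mathlib

/-!
STATEMENT 1: One full agent-environment cycle of the AEC game constructed
from a POSG (queueing the fixed joint action `astar` component by component
via the maps `T_i`, then applying the environment kernel `P'`) reproduces
exactly one transition step of the POSG in distribution: the resulting
distribution `μ''` is supported on pairs whose action component is `astar`,
and its S-marginal at `s'` is `∑_s μ(s) · P(s, astar, s')`.
-/

open Finset

lemma foldl_update_eval {N : ℕ} {A : Fin N → Type*} [∀ i, DecidableEq (A i)]
    (astar : ∀ i, A i) :
    ∀ (l : List (Fin N)) (c : ∀ i, A i) (j : Fin N),
      (l.foldl (fun c i => Function.update c i (astar i)) c) j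
        = if j ∈ l then astar j else c j := by
  intro l
  induction l with
  | nil => simp
  | cons hd tl ih =>
    intro c j
    simp only [List.foldl_cons, ih, List.mem_cons]
    by_cases hjt : j ∈ tl
    · simp [hjt]
    · by_cases hjh : j = hd
      · subst hjh; simp [hjt]
      · simp [hjt, hjh, Function.update_of_ne hjh]


theorem posg_to_aec_one_cycle
    {S : Type*} [Fintype S] [DecidableEq S] {N : ℕ} {A : Fin N → Type*}
    [∀ i, Fintype (A i)] [∀ i, DecidableEq (A i)]
    (P : S → (∀ i, A i) → S → ℝ)
    (hP0 : ∀ s a s', 0 ≤ P s a s')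
    (hP1 : ∀ s a s', P s a s' ≤ 1)
    (hPsum : ∀ s a, ∑ s' : S, P s a s' = 1)
    (μ : S → ℝ) (hμ0 : ∀ s, 0 ≤ μ s) (hμsum : ∑ s : S, μ s = 1)
    (b astar : ∀ i, A i) :
    -- initial distribution on S' = S × A, queueing the arbitrary fixed tuple b
    let μ0 : S × (∀ i, A i) → ℝ := fun σ => if σ.2 = b then μ σ.1 else 0
    -- pushforward under the deterministic queueing map T_i(·, astar i)
    let push : Fin N → (S × (∀ i, A i) → ℝ) → (S × (∀ i, A i) → ℝ) :=
      fun i m σ' => ∑ σ : S × (∀ i, A i),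
        if (σ.1, Function.update σ.2 i (astar i)) = σ' then m σ else 0
    -- apply the pushforwards successively for i = 1, …, N
    let ν : S × (∀ i, A i) → ℝ := (List.finRange N).foldl (fun m i => push i m) μ0
    -- then apply the environment kernel P'((s,a),(s',a')) = P(s,a,s')·[a = a']
    let μ'' : S × (∀ i, A i) → ℝ := fun σ' =>
      ∑ σ : S × (∀ i, A i), ν σ * (if σ.2 = σ'.2 then P σ.1 σ.2 σ'.1 else 0)
    (∀ (s' : S) (a' : ∀ i, A i), a' ≠ astar → μ'' (s', a') = 0) ∧
    (∀ s' : S,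
        (∑ a' : ∀ i, A i, μ'' (s', a')) = μ'' (s', astar) ∧
        μ'' (s', astar) = ∑ s : S, μ s * P s astar s') := by
  intro μ0 push ν μ''
  -- one pushforward step on a deterministic-action distribution
  have hpush : ∀ (i : Fin N) (c : ∀ i, A i),
      push i (fun σ => if σ.2 = c then μ σ.1 else 0)
        = fun σ => if σ.2 = Function.update c i (astar i) then μ σ.1 else 0 := by
    intro i c
    funext σ'
    simp only [push]
    rw [Fintype.sum_prod_type]
    have : ∀ s : S, (∑ a : ∀ i, A i,
        if ((s, Function.update a i (astar i)) : S × (∀ i, A i)) = σ'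
          then (if a = c then μ s else 0) else 0)
        = if s = σ'.1 ∧ σ'.2 = Function.update c i (astar i) then μ s else 0 := by
      intro s
      rw [Finset.sum_congr rfl (fun a _ => ?_), Finset.sum_ite_eq' Finset.univ c
        (fun a => if ((s, Function.update a i (astar i)) : S × (∀ i, A i)) = σ' then μ s else 0)]
      · simp [Prod.ext_iff, eq_comm, and_comm]
      · by_cases h : a = c <;> by_cases h2 : ((s, Function.update a i (astar i)) : S × (∀ i, A i)) = σ' <;> simp [h, h2]
    rw [Finset.sum_congr rfl (fun s _ => this s)]
    by_cases h : σ'.2 = Function.update c i (astar i) <;> simp [h]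
  -- the fold
  have hfold : ∀ (l : List (Fin N)) (c : ∀ i, A i),
      l.foldl (fun m i => push i m) (fun σ => if σ.2 = c then μ σ.1 else 0)
        = fun σ => if σ.2 = l.foldl (fun c i => Function.update c i (astar i)) c then μ σ.1 else 0 := by
    intro l
    induction l with
    | nil => intro c; rfl
    | cons hd tl ih =>
      intro c
      simp only [List.foldl_cons, hpush, ih]
      rfl
  have hν : ν = fun σ => if σ.2 = astar then μ σ.1 else 0 := by
    have hμ0eq : μ0 = fun σ => if σ.2 = b then μ σ.1 else 0 := rfl
    have := hfold (List.finRange N) b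
    have hb : (List.finRange N).foldl (fun c i => Function.update c i (astar i)) b = astar := by
      funext j
      rw [foldl_update_eval]
      simp [List.mem_finRange]
    simpa [ν, hμ0eq, hb] using this
  have key : ∀ (s' : S) (a' : ∀ i, A i),
      μ'' (s', a') = if astar = a' then ∑ s : S, μ s * P s astar s' else 0 := by
    intro s' a'
    simp only [μ'', hν]
    rw [Fintype.sum_prod_type]
    have : ∀ s : S, (∑ a : ∀ i, A i,
        (if a = astar then μ s else 0) * (if a = a' then P s a s' else 0))
        = (if astar = a' then μ s * P s astar s' else 0) := by
      intro s
      rw [Finset.sum_congr rfl (fun a _ => ?_), Finset.sum_ite_eq' Finset.univ astar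
        (fun a => μ s * (if a = a' then P s a s' else 0))]
      · simp
      · by_cases h : a = astar <;> simp [h]
    rw [Finset.sum_congr rfl (fun s _ => this s)]
    by_cases h : astar = a' <;> simp [h]
  constructor
  · intro s' a' ha
    rw [key]
    simp [Ne.symm ha]
  · intro s'
    constructor
    · rw [Finset.sum_congr rfl (fun a' _ => key s' a'), Finset.sum_ite_eq Finset.univ astar
        (fun _ => ∑ s : S, μ s * P s astar s'), key]
      simp
    · rw [key]; simp
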